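/- If the symmetric Laurent polynomial f(z_1,...,z_m) is a genuine polynomial, homogeneous of degree at least m in each variable z_k, then in the Grassmannian residue formula the residue at z_k = 0 of the form f(Z)·∏_{i≠j}(1 - z_i/z_j)·(1/z_k) / ∏_{i,k}(1 - z_k/t_i) vanishes for each k. -/

import Mathlib

open Finset Metric


/-- If the polynomial `f` in `m` variables has degree at least `m` in each
variable `z k` (in every monomial), then in the Grassmannian residue formula the residue
at `z k = 0` of the form
`f(Z) ∏_{i≠j} (1 - z i / z j) · (1/z k) / ∏_{i,l} (1 - z l / t i) dz k`
vanishes for each `k`: the integrand, as a function of `z k` (the other variables fixed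
and nonzero), is holomorphic at `z k = 0`, so the residue (circle integral over a small
circle of radius `r < min |t i|`) is zero. -/
theorem stmt7 (m n : ℕ) (t : Fin n → ℂ) (ht : ∀ i, t i ≠ 0)
    (f : MvPolynomial (Fin m) ℂ)
    (hdeg : ∀ d ∈ f.support, ∀ k : Fin m, m ≤ d k)
    (k : Fin m) (z : Fin m → ℂ) (hz : ∀ j, z j ≠ 0)
    (r : ℝ) (hr : 0 < r) (hrt : ∀ i, r < ‖t i‖) :
    (∮ w in C(0, r),
        MvPolynomial.eval (Function.update z k w) f
            * (∏ p ∈ (Finset.univ : Finset (Fin m)).offDiag,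
                (1 - Function.update z k w p.1 / Function.update z k w p.2))
          / (w * ∏ i, ∏ l, (1 - Function.update z k w l / t i))) = 0 := by
  classical
  set c2 : ℂ := ∏ i, ∏ l ∈ Finset.univ.erase k, (1 - z l / t i) with hc2def
  have hDfac : ∀ w : ℂ, (∏ i, ∏ l, (1 - Function.update z k w l / t i))
      = (∏ i, (1 - w / t i)) * c2 := by
    intro w
    rw [hc2def, ← Finset.prod_mul_distrib]
    refine Finset.prod_congr rfl fun i _ => ?_
    rw [← Finset.mul_prod_erase Finset.univ _ (Finset.mem_univ k), Function.update_self]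
    congr 1
    exact Finset.prod_congr rfl fun l hl =>
      by rw [Function.update_of_ne (Finset.ne_of_mem_erase hl)]
  by_cases hc2 : c2 = 0
  · have h0 : ∀ w : ℂ,
        MvPolynomial.eval (Function.update z k w) f
            * (∏ p ∈ (Finset.univ : Finset (Fin m)).offDiag,
                (1 - Function.update z k w p.1 / Function.update z k w p.2))
          / (w * ∏ i, ∏ l, (1 - Function.update z k w l / t i)) = 0 := by
      intro w
      rw [hDfac w, hc2, mul_zero, mul_zero, div_zero]
    simp only [h0]
    simp [circleIntegral]
  -- main case
  have hm : m - 1 + 1 = m := Nat.succ_pred_eq_of_pos (Fin.pos k)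
  set q : ℂ → ℂ := fun w => ∑ d ∈ f.support,
      MvPolynomial.coeff d f * (w ^ (d k - m) * ∏ j ∈ Finset.univ.erase k, z j ^ d j)
    with hqdef
  have hEfac : ∀ w : ℂ,
      MvPolynomial.eval (Function.update z k w) f = w ^ m * q w := by
    intro w
    rw [MvPolynomial.eval_eq', hqdef, Finset.mul_sum]
    refine Finset.sum_congr rfl fun d hd => ?_
    rw [← Finset.mul_prod_erase Finset.univ _ (Finset.mem_univ k), Function.update_self]
    have hzpow : ∀ j ∈ Finset.univ.erase k,
        Function.update z k w j ^ d j = z j ^ d j := fun j hj => by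
      rw [Function.update_of_ne (Finset.ne_of_mem_erase hj)]
    rw [Finset.prod_congr rfl hzpow]
    have hwpow : w ^ d k = w ^ m * w ^ (d k - m) := by
      rw [← pow_add, Nat.add_sub_cancel' (hdeg d hd k)]
    rw [hwpow]; ring
  have hqdiff : Differentiable ℂ q := by
    rw [hqdef]
    apply Differentiable.fun_sum
    intro d _
    exact (((differentiable_pow (d k - m)).mul_const _).const_mul _)
  set ν : Fin m × Fin m → ℂ → ℂ := fun p w =>
    if p.2 = k then w - z p.1 else if p.1 = k then 1 - w / z p.2 else 1 - z p.1 / z p.2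
    with hνdef
  have hνdiff : ∀ p : Fin m × Fin m, Differentiable ℂ (ν p) := by
    intro p
    rw [hνdef]
    by_cases h2 : p.2 = k
    · simp only [h2, if_pos rfl]
      exact differentiable_id.sub_const _
    · simp only [if_neg h2]
      by_cases h1 : p.1 = k
      · simp only [h1, if_pos rfl]
        exact (differentiable_const _).sub (differentiable_id.div_const _)
      · simp only [if_neg h1]
        exact differentiable_const _
  have hcard : ((Finset.univ.offDiag).filter (fun p : Fin m × Fin m => p.2 = k)).card
      = m - 1 := by
    have h : (Finset.univ.offDiag).filter (fun p : Fin m × Fin m => p.2 = k)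
        = (Finset.univ.erase k).image (fun a => (a, k)) := by
      ext p
      simp only [mem_filter, mem_offDiag, mem_image, mem_erase, mem_univ, true_and, and_true]
      constructor
      · rintro ⟨hne, rfl⟩; exact ⟨p.1, hne, rfl⟩
      · rintro ⟨a, ha, rfl⟩; exact ⟨ha, rfl⟩
    rw [h, Finset.card_image_of_injective _ (fun a b h => by simpa using congrArg Prod.fst h),
      Finset.card_erase_of_mem (mem_univ k), card_univ, Fintype.card_fin]
  have hPfac : ∀ w : ℂ, w ≠ 0 →
      (∏ p ∈ (Finset.univ : Finset (Fin m)).offDiag,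
        (1 - Function.update z k w p.1 / Function.update z k w p.2))
      = (∏ p ∈ (Finset.univ : Finset (Fin m)).offDiag, ν p w) / w ^ (m - 1) := by
    intro w hw
    have hfac : ∀ p ∈ (Finset.univ : Finset (Fin m)).offDiag,
        ν p w = (1 - Function.update z k w p.1 / Function.update z k w p.2)
          * (if p.2 = k then w else 1) := by
      rintro ⟨a, b⟩ hp
      have hab : a ≠ b := (Finset.mem_offDiag.mp hp).2.2
      simp only [hνdef]
      by_cases hb : b = k
      · have ha : a ≠ k := fun h => hab (h.trans hb.symm)
        subst hb
        simp only [if_pos rfl, ↓reduceIte, Function.update_self, Function.update_of_ne ha]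
        field_simp
      · simp only [if_neg hb, Function.update_of_ne hb]
        by_cases ha : a = k
        · subst ha
          simp [Function.update_self, Function.update_of_ne hb]
        · simp only [if_neg ha, Function.update_of_ne ha, mul_one]
    have hprodν : (∏ p ∈ (Finset.univ : Finset (Fin m)).offDiag, ν p w)
        = (∏ p ∈ (Finset.univ : Finset (Fin m)).offDiag,
            (1 - Function.update z k w p.1 / Function.update z k w p.2)) * w ^ (m - 1) := by
      rw [Finset.prod_congr rfl hfac, Finset.prod_mul_distrib]
      congr 1
      rw [← Finset.prod_filter, Finset.prod_const, hcard]
    rw [hprodν, mul_div_assoc, div_self (pow_ne_zero _ hw), mul_one]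
  -- the holomorphic substitute
  set g : ℂ → ℂ := fun w =>
      q w * (∏ p ∈ (Finset.univ : Finset (Fin m)).offDiag, ν p w)
        / ((∏ i, (1 - w / t i)) * c2) with hgdef
  have hDt : ∀ w : ℂ, w ∈ closedBall (0 : ℂ) r → (∏ i, (1 - w / t i)) ≠ 0 := by
    intro w hwb
    refine Finset.prod_ne_zero_iff.mpr fun i _ => ?_
    intro h
    have h1 : w / t i = 1 := (sub_eq_zero.mp h).symm
    have habs : ‖w / t i‖ < 1 := by
      rw [norm_div, div_lt_one (lt_trans hr (hrt i))]
      calc ‖w‖ ≤ r := by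
            simpa [Complex.dist_eq] using mem_closedBall.mp hwb
        _ < ‖t i‖ := hrt i
    rw [h1] at habs
    simp at habs
  have hgdiff : ∀ w ∈ closedBall (0 : ℂ) r, DifferentiableAt ℂ g w := by
    intro w hwb
    rw [hgdef]
    apply DifferentiableAt.div
    · exact ((hqdiff w).mul ((Differentiable.fun_finsetProd fun p _ => hνdiff p) w))
    · exact ((Differentiable.fun_finsetProd fun i _ =>
        (differentiable_const (1 : ℂ)).sub (differentiable_id.div_const (t i))) w).mul
        (differentiableAt_const c2)
    · exact mul_ne_zero (hDt w hwb) hc2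
  have hg0 : (∮ w in C(0, r), g w) = 0 := by
    refine Complex.circleIntegral_eq_zero_of_differentiable_on_off_countable hr.le
      Set.countable_empty (fun w hwb => (hgdiff w hwb).continuousAt.continuousWithinAt)
      (fun w hwb => hgdiff w (ball_subset_closedBall hwb.1))
  have heq : (∮ w in C(0, r),
        MvPolynomial.eval (Function.update z k w) f
            * (∏ p ∈ (Finset.univ : Finset (Fin m)).offDiag,
                (1 - Function.update z k w p.1 / Function.update z k w p.2))
          / (w * ∏ i, ∏ l, (1 - Function.update z k w l / t i)))
      = ∮ w in C(0, r), g w := by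
    refine circleIntegral.integral_congr hr.le fun w hwsph => ?_
    have hwb : w ∈ closedBall (0 : ℂ) r := sphere_subset_closedBall hwsph
    have hw : w ≠ 0 := by
      intro h
      rw [mem_sphere, h] at hwsph
      simp at hwsph
      exact hr.ne' hwsph.symm
    have hDtw := hDt w hwb
    simp only [hgdef]
    rw [hEfac w, hPfac w hw, hDfac w]
    have hwm : w ^ m = w ^ (m - 1) * w := by rw [← pow_succ, hm]
    field_simp
    rw [hwm]; ring
  rw [heq]; exact hg0
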